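/- Let V be a finite type, N ∈ ℕ, Ω := {η : V → ℕ | Σ_x η_x ≤ N}, and 𝒜 the annihilation operator on functions Ω → ℝ, (𝒜f)(η) := Σ_{x ∈ V} η_x · f(η − δ_x). Let L be a linear operator on functions Ω → ℝ commuting with 𝒜 and preserving each particle-number sector. Assume moreover that for every f : Ω → ℝ and every η ∈ Ω the limit (Pf)(η) := lim_{t→∞} (exp(t·L)f)(η) exists. Then for every x = (x_1,…,x_n) ∈ V^n with n ≤ N and every configuration ζ with |ζ| = m, 1 ≤ m < n: (P(F(ζ,·)))(φ(x)) = Σ_{S ⊆ {1,…,n}, |S| = m} (P h_ζ)(φ(x|_S)), where h_ζ is the indicator of ζ and x|_S = (x_i)_{i ∈ S}. -/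

import Mathlib

/-- Configurations on `V` with at most `N` particles. -/
abbrev Conf (V : Type*) [Fintype V] (N : ℕ) := {η : V → ℕ // ∑ x, η x ≤ N}

noncomputable instance Conf.fintype (V : Type*) [Fintype V] [DecidableEq V] (N : ℕ) :
    Fintype (Conf V N) :=
  Fintype.ofInjective
    (fun η : Conf V N =>
      (fun x => ⟨η.1 x, Nat.lt_succ_of_le
        ((Finset.single_le_sum (f := η.1) (fun i _ => Nat.zero_le _)
          (Finset.mem_univ x)).trans η.2)⟩ : V → Fin (N + 1)))
    (by
      intro a b h
      apply Subtype.ext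
      funext x
      exact congrArg Fin.val (congrFun h x))

/-- `η - δ_x` : remove one particle at `x`. -/
def removeAt {V : Type*} [Fintype V] [DecidableEq V] {N : ℕ}
    (η : Conf V N) (x : V) : Conf V N :=
  ⟨fun y => η.1 y - (if y = x then 1 else 0),
    le_trans (Finset.sum_le_sum fun i _ => Nat.sub_le _ _) η.2⟩

/-- The annihilation operator `(𝒜 f)(η) = ∑_x η_x f(η - δ_x)`. -/
noncomputable def ann {V : Type*} [Fintype V] [DecidableEq V] {N : ℕ}
    (f : Conf V N → ℝ) : Conf V N → ℝ :=
  fun η => ∑ x : V, (η.1 x : ℝ) * f (removeAt η x)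

/-- `F ξ η = ∏_{x ∈ V} C(η x, ξ x)`. -/
def Ffun {V : Type*} [Fintype V] {N : ℕ} (ξ η : Conf V N) : ℕ :=
  ∏ x : V, Nat.choose (η.1 x) (ξ.1 x)

/-- The configuration `φ((xᵢ)_{i ∈ S}) = ∑_{i ∈ S} δ_{xᵢ}` of a subfamily of
labeled particle positions, as an element of `Conf V N` (for `n ≤ N`). -/
def phiS {V : Type*} [Fintype V] [DecidableEq V] {N n : ℕ} (hn : n ≤ N)
    (x : Fin n → V) (S : Finset (Fin n)) : Conf V N :=
  ⟨fun y => ∑ i ∈ S, if x i = y then 1 else 0, by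
    calc ∑ y : V, ∑ i ∈ S, (if x i = y then (1 : ℕ) else 0)
        = ∑ i ∈ S, ∑ y : V, (if x i = y then (1 : ℕ) else 0) := Finset.sum_comm
      _ = ∑ _i ∈ S, 1 := by
            refine Finset.sum_congr rfl fun i _ => ?_
            simp [Finset.sum_ite_eq]
      _ = S.card := by simp
      _ ≤ n := by simpa using Finset.card_le_univ S
      _ ≤ N := hn⟩

/-- Operator exponential `exp(t L)` on the finite-dimensional space of functions. -/
noncomputable def expOp {Ω : Type*} [Fintype Ω] (t : ℝ) (L : (Ω → ℝ) →ₗ[ℝ] (Ω → ℝ)) :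
    (Ω → ℝ) →L[ℝ] (Ω → ℝ) :=
  NormedSpace.exp (t • (LinearMap.toContinuousLinearMap L))

open Filter Topology

section Aux

variable {V : Type*} [Fintype V] [DecidableEq V] {N : ℕ}

/-- `ann` as a linear map. -/
noncomputable def annL (V : Type*) [Fintype V] [DecidableEq V] (N : ℕ) :
    (Conf V N → ℝ) →ₗ[ℝ] (Conf V N → ℝ) where
  toFun := ann
  map_add' f g := by
    funext η
    simp [ann, mul_add, Finset.sum_add_distrib]
  map_smul' c f := by
    funext η
    simp only [ann, Pi.smul_apply, smul_eq_mul, RingHom.id_apply, Finset.mul_sum]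
    exact Finset.sum_congr rfl fun y _ => by ring

lemma ann_eq_annL (f : Conf V N → ℝ) : ann f = annL V N f := rfl

/-- `exp(tL)` commutes with the annihilation operator. -/
lemma expOp_ann (L : (Conf V N → ℝ) →ₗ[ℝ] (Conf V N → ℝ))
    (hcomm : ∀ f, L (ann f) = ann (L f)) (t : ℝ) (f : Conf V N → ℝ) :
    expOp t L (ann f) = ann (expOp t L f) := by
  set A := LinearMap.toContinuousLinearMap (annL V N) with hA
  set B := t • LinearMap.toContinuousLinearMap L with hB
  have hAB : Commute A B := by
    refine ContinuousLinearMap.ext fun g => ?_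
    show A (B g) = B (A g)
    have h1 : B g = t • (L g) := by
      simp [hB, ContinuousLinearMap.smul_apply]
    have h2 : ∀ u, A u = ann u := fun u => rfl
    rw [h1, h2, h2, hB]
    simp only [ContinuousLinearMap.smul_apply, LinearMap.coe_toContinuousLinearMap']
    rw [ann_eq_annL, map_smul, ← ann_eq_annL, ← hcomm]
  have hC : Commute A (NormedSpace.exp B) := hAB.exp_right
  have : (NormedSpace.exp B) (A f) = A ((NormedSpace.exp B) f) := by
    have := hC.symm.eq
    calc (NormedSpace.exp B) (A f) = ((NormedSpace.exp B) * A) f := rfl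
      _ = (A * (NormedSpace.exp B)) f := by rw [hC.eq]
      _ = A ((NormedSpace.exp B) f) := rfl
  exact this

open Filter Topology in
/-- `P` commutes with the annihilation operator. -/
lemma P_ann (L : (Conf V N → ℝ) →ₗ[ℝ] (Conf V N → ℝ))
    (hcomm : ∀ f, L (ann f) = ann (L f))
    (P : (Conf V N → ℝ) → Conf V N → ℝ)
    (hP : ∀ (f : Conf V N → ℝ) (η : Conf V N),
        Tendsto (fun t : ℝ => expOp t L f η) atTop (𝓝 (P f η)))
    (g : Conf V N → ℝ) (η : Conf V N) :
    P (ann g) η = ann (P g) η := by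
  refine tendsto_nhds_unique (hP (ann g) η) ?_
  have h1 : ∀ t : ℝ, expOp t L (ann g) η = ∑ x : V, (η.1 x : ℝ) * expOp t L g (removeAt η x) := by
    intro t
    rw [expOp_ann L hcomm]
    rfl
  simp only [h1, ann]
  exact tendsto_finset_sum _ fun x _ => (hP g (removeAt η x)).const_mul _

open Filter Topology in
lemma P_ann_iter (L : (Conf V N → ℝ) →ₗ[ℝ] (Conf V N → ℝ))
    (hcomm : ∀ f, L (ann f) = ann (L f))
    (P : (Conf V N → ℝ) → Conf V N → ℝ)
    (hP : ∀ (f : Conf V N → ℝ) (η : Conf V N),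
        Tendsto (fun t : ℝ => expOp t L f η) atTop (𝓝 (P f η)))
    (g : Conf V N → ℝ) (k : ℕ) (η : Conf V N) :
    P (ann^[k] g) η = (ann^[k] (P g)) η := by
  induction k generalizing η with
  | zero => rfl
  | succ j ih =>
      rw [Function.iterate_succ_apply', Function.iterate_succ_apply',
        P_ann L hcomm P hP]
      rw [funext ih]

open Filter Topology in
lemma P_smul (L : (Conf V N → ℝ) →ₗ[ℝ] (Conf V N → ℝ))
    (P : (Conf V N → ℝ) → Conf V N → ℝ)
    (hP : ∀ (f : Conf V N → ℝ) (η : Conf V N),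
        Tendsto (fun t : ℝ => expOp t L f η) atTop (𝓝 (P f η)))
    (c : ℝ) (g : Conf V N → ℝ) (η : Conf V N) :
    P (c • g) η = c * P g η := by
  refine tendsto_nhds_unique (hP (c • g) η) ?_
  have h1 : ∀ t : ℝ, expOp t L (c • g) η = c * expOp t L g η := by
    intro t
    rw [map_smul]
    simp
  simp only [h1]
  exact (hP g η).const_mul c

lemma sector_pow (L : (Conf V N → ℝ) →ₗ[ℝ] (Conf V N → ℝ))
    (hsector : ∀ k ≤ N, ∀ f : Conf V N → ℝ,
        (∀ η : Conf V N, (∑ x, η.1 x) ≠ k → f η = 0) →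
        ∀ η : Conf V N, (∑ x, η.1 x) ≠ k → L f η = 0)
    (k : ℕ) (hk : k ≤ N) (g : Conf V N → ℝ)
    (hg : ∀ η : Conf V N, (∑ x, η.1 x) ≠ k → g η = 0) (t : ℝ) :
    ∀ (j : ℕ) (η : Conf V N), (∑ x, η.1 x) ≠ k →
      (((t • LinearMap.toContinuousLinearMap L) ^ j) g) η = 0 := by
  intro j
  induction j with
  | zero =>
      intro η hη
      simpa using hg η hη
  | succ i ih =>
      intro η hη
      rw [pow_succ']
      have hstep : ((t • LinearMap.toContinuousLinearMap L) *
            (t • LinearMap.toContinuousLinearMap L) ^ i) g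
          = t • L (((t • LinearMap.toContinuousLinearMap L) ^ i) g) := by
        rw [ContinuousLinearMap.mul_apply]
        simp
      rw [hstep]
      have h0 := hsector k hk _ ih η hη
      simp only [Pi.smul_apply, h0, smul_zero]

lemma sector_exp (L : (Conf V N → ℝ) →ₗ[ℝ] (Conf V N → ℝ))
    (hsector : ∀ k ≤ N, ∀ f : Conf V N → ℝ,
        (∀ η : Conf V N, (∑ x, η.1 x) ≠ k → f η = 0) →
        ∀ η : Conf V N, (∑ x, η.1 x) ≠ k → L f η = 0)
    (k : ℕ) (hk : k ≤ N) (g : Conf V N → ℝ)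
    (hg : ∀ η : Conf V N, (∑ x, η.1 x) ≠ k → g η = 0) (t : ℝ)
    (η : Conf V N) (hη : (∑ x, η.1 x) ≠ k) :
    expOp t L g η = 0 := by
  set B := t • LinearMap.toContinuousLinearMap L with hB
  set ev : ((Conf V N → ℝ) →L[ℝ] (Conf V N → ℝ)) →L[ℝ] ℝ :=
    (ContinuousLinearMap.proj η).comp
      (ContinuousLinearMap.apply ℝ (Conf V N → ℝ) g) with hev
  have h1 : expOp t L g η = ev (NormedSpace.exp B) := rfl
  rw [h1, NormedSpace.exp_eq_tsum (𝕂 := ℝ),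
    ContinuousLinearMap.map_tsum ev (NormedSpace.expSeries_summable' (𝕂 := ℝ) B)]
  have hz : ∀ i : ℕ, ev ((i.factorial : ℝ)⁻¹ • B ^ i) = 0 := by
    intro i
    have hpt : ev ((i.factorial : ℝ)⁻¹ • B ^ i)
        = (i.factorial : ℝ)⁻¹ * ((B ^ i) g η) := by
      simp [hev, ContinuousLinearMap.comp_apply, ContinuousLinearMap.apply_apply,
        ContinuousLinearMap.proj_apply]
    rw [hpt, sector_pow L hsector k hk g hg t i η hη, mul_zero]
  rw [tsum_congr hz]
  exact tsum_zero

open Filter Topology in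
lemma P_eq_on_sector (L : (Conf V N → ℝ) →ₗ[ℝ] (Conf V N → ℝ))
    (hsector : ∀ k ≤ N, ∀ f : Conf V N → ℝ,
        (∀ η : Conf V N, (∑ x, η.1 x) ≠ k → f η = 0) →
        ∀ η : Conf V N, (∑ x, η.1 x) ≠ k → L f η = 0)
    (P : (Conf V N → ℝ) → Conf V N → ℝ)
    (hP : ∀ (f : Conf V N → ℝ) (η : Conf V N),
        Tendsto (fun t : ℝ => expOp t L f η) atTop (𝓝 (P f η)))
    (f f' : Conf V N → ℝ) (n : ℕ)
    (hff' : ∀ ξ : Conf V N, (∑ x, ξ.1 x) = n → f ξ = f' ξ)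
    (η : Conf V N) (hη : (∑ x, η.1 x) = n) : P f η = P f' η := by
  classical
  have hvan : ∀ t : ℝ, expOp t L (f - f') η = 0 := by
    intro t
    -- decompose f - f' over sectors
    set g : Conf V N → ℝ := f - f' with hg
    have hgz : ∀ ξ : Conf V N, (∑ x, ξ.1 x) = n → g ξ = 0 := by
      intro ξ hξ
      simp [hg, hff' ξ hξ]
    have hdecomp : g = ∑ k ∈ Finset.range (N + 1),
        (fun ξ : Conf V N => if (∑ x, ξ.1 x) = k then g ξ else 0) := by
      funext ξ
      rw [Finset.sum_apply]
      rw [Finset.sum_ite_eq (Finset.range (N + 1)) (∑ x, ξ.1 x) (fun _ => g ξ)]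
      simp [Nat.lt_succ_of_le ξ.2]
    rw [hdecomp, map_sum, Finset.sum_apply]
    refine Finset.sum_eq_zero fun k hk => ?_
    by_cases hkn : k = n
    · subst hkn
      have hzero : (fun ξ : Conf V N => if (∑ x, ξ.1 x) = k then g ξ else 0) = 0 := by
        funext ξ
        by_cases hc : (∑ x, ξ.1 x) = k
        · simp [hc, hgz ξ hc]
        · simp [hc]
      rw [hzero, map_zero]
      rfl
    · exact sector_exp L hsector k (Nat.lt_succ_iff.mp (Finset.mem_range.mp hk)) _
        (fun ξ hξ => if_neg hξ) t η (by rw [hη]; exact fun hc => hkn hc.symm)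
  refine tendsto_nhds_unique (hP f η) ?_
  have heq : ∀ t : ℝ, expOp t L f η = expOp t L f' η := by
    intro t
    have h0 := hvan t
    rw [map_sub] at h0
    have : expOp t L f η - expOp t L f' η = 0 := by
      simpa using h0
    linarith
  simp only [heq]
  exact hP f' η

lemma phiS_sum {n : ℕ} (hn : n ≤ N) (x : Fin n → V) (S : Finset (Fin n)) :
    (∑ y, (phiS hn x S).1 y) = S.card := by
  classical
  calc ∑ y : V, ∑ i ∈ S, (if x i = y then (1 : ℕ) else 0)
      = ∑ i ∈ S, ∑ y : V, (if x i = y then (1 : ℕ) else 0) := Finset.sum_comm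
    _ = ∑ _i ∈ S, 1 := by
          refine Finset.sum_congr rfl fun i _ => ?_
          simp [Finset.sum_ite_eq]
    _ = S.card := by simp

lemma removeAt_phiS {n : ℕ} (hn : n ≤ N) (x : Fin n → V) {S : Finset (Fin n)} {i : Fin n}
    (hi : i ∈ S) : removeAt (phiS hn x S) (x i) = phiS hn x (S.erase i) := by
  apply Subtype.ext
  funext y
  show (∑ j ∈ S, if x j = y then 1 else 0) - (if y = x i then 1 else 0)
      = ∑ j ∈ S.erase i, if x j = y then 1 else 0
  rw [← Finset.sum_erase_add S _ hi]
  have hswap : (if y = x i then (1:ℕ) else 0) = (if x i = y then 1 else 0) :=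
    if_congr eq_comm rfl rfl
  rw [hswap, Nat.add_sub_cancel]

lemma ann_phiS {n : ℕ} (hn : n ≤ N) (x : Fin n → V) (S : Finset (Fin n))
    (g : Conf V N → ℝ) :
    ann g (phiS hn x S) = ∑ i ∈ S, g (phiS hn x (S.erase i)) := by
  classical
  have hcoord : ∀ y : V, ((phiS hn x S).1 y : ℝ)
      = ∑ i ∈ S, (if x i = y then (1 : ℝ) else 0) := by
    intro y
    show ((∑ i ∈ S, if x i = y then (1:ℕ) else 0 : ℕ) : ℝ) = _
    push_cast
    exact Finset.sum_congr rfl fun i _ => by split <;> norm_num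
  calc ann g (phiS hn x S)
      = ∑ y : V, ((phiS hn x S).1 y : ℝ) * g (removeAt (phiS hn x S) y) := rfl
    _ = ∑ y : V, ∑ i ∈ S, (if x i = y then (1:ℝ) else 0) * g (removeAt (phiS hn x S) y) := by
        refine Finset.sum_congr rfl fun y _ => ?_
        rw [hcoord, Finset.sum_mul]
    _ = ∑ i ∈ S, ∑ y : V, (if x i = y then (1:ℝ) else 0) * g (removeAt (phiS hn x S) y) :=
        Finset.sum_comm
    _ = ∑ i ∈ S, g (removeAt (phiS hn x S) (x i)) := by
        refine Finset.sum_congr rfl fun i _ => ?_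
        simp [ite_mul, Finset.sum_ite_eq]
    _ = ∑ i ∈ S, g (phiS hn x (S.erase i)) :=
        Finset.sum_congr rfl fun i hi => by rw [removeAt_phiS hn x hi]

lemma ann_iter_phiS {n : ℕ} (hn : n ≤ N) (x : Fin n → V) (g : Conf V N → ℝ) :
    ∀ (k : ℕ) (S : Finset (Fin n)), k ≤ S.card →
      (ann^[k] g) (phiS hn x S)
        = (k.factorial : ℝ) * ∑ T ∈ Finset.powersetCard (S.card - k) S, g (phiS hn x T) := by
  intro k
  induction k with
  | zero =>
      intro S _
      simp [Finset.powersetCard_self]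
  | succ j ih =>
      intro S hS
      rw [Function.iterate_succ_apply', ann_phiS]
      have step : ∀ i ∈ S, (ann^[j] g) (phiS hn x (S.erase i))
          = (j.factorial : ℝ) *
            ∑ T ∈ Finset.powersetCard (S.card - (j + 1)) (S.erase i), g (phiS hn x T) := by
        intro i hi
        rw [ih (S.erase i) (by rw [Finset.card_erase_of_mem hi]; omega),
          Finset.card_erase_of_mem hi]
        have harith : S.card - 1 - j = S.card - (j + 1) := by omega
        rw [harith]
      rw [Finset.sum_congr rfl step, ← Finset.mul_sum]
      have hswap : ∑ i ∈ S, ∑ T ∈ Finset.powersetCard (S.card - (j + 1)) (S.erase i),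
            g (phiS hn x T)
          = ∑ T ∈ Finset.powersetCard (S.card - (j + 1)) S, ∑ _i ∈ S \ T, g (phiS hn x T) := by
        refine Finset.sum_comm' ?_
        intro i T
        simp only [Finset.mem_powersetCard, Finset.subset_erase, Finset.mem_sdiff]
        constructor
        · rintro ⟨hiS, ⟨hTS, hiT⟩, hc⟩
          exact ⟨⟨hiS, hiT⟩, hTS, hc⟩
        · rintro ⟨⟨hiS, hiT⟩, hTS, hc⟩
          exact ⟨hiS, ⟨hTS, hiT⟩, hc⟩
      rw [hswap]
      have hinner : ∀ T ∈ Finset.powersetCard (S.card - (j + 1)) S,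
          ∑ _i ∈ S \ T, g (phiS hn x T) = ((j : ℝ) + 1) * g (phiS hn x T) := by
        intro T hT
        have h1 : (S \ T).card = j + 1 := by
          rw [Finset.card_sdiff_of_subset (Finset.mem_powersetCard.mp hT).1,
            (Finset.mem_powersetCard.mp hT).2]
          omega
        rw [Finset.sum_const, h1, nsmul_eq_mul]
        push_cast
        ring
      rw [Finset.sum_congr rfl hinner, ← Finset.mul_sum, ← mul_assoc]
      congr 1
      rw [Nat.factorial_succ]
      push_cast
      ring

lemma sum_removeAt (η : Conf V N) (y : V) (h1 : 1 ≤ η.1 y) :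
    (∑ x, (removeAt η y).1 x) = (∑ x, η.1 x) - 1 := by
  have hle : ∀ z : V, (if z = y then 1 else 0) ≤ η.1 z := by
    intro z
    by_cases hz : z = y
    · rw [if_pos hz, hz]; exact h1
    · rw [if_neg hz]; exact Nat.zero_le _
  have hsplit : (∑ z, (η.1 z - if z = y then 1 else 0)) + (∑ z : V, if z = y then 1 else 0)
      = ∑ z, η.1 z := by
    rw [← Finset.sum_add_distrib]
    exact Finset.sum_congr rfl fun z _ => Nat.sub_add_cancel (hle z)
  have hone : (∑ z : V, if z = y then (1:ℕ) else 0) = 1 := by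
    simp [Finset.sum_ite_eq']
  show (∑ z, (η.1 z - if z = y then 1 else 0)) = _
  omega

lemma choose_step (a b : ℕ) : a * Nat.choose (a - 1) b = (a - b) * Nat.choose a b := by
  cases a with
  | zero => simp
  | succ e =>
      have h := Nat.choose_mul_succ_eq e b
      simp only [Nat.succ_sub_one]
      calc (e + 1) * e.choose b = e.choose b * (e + 1) := mul_comm _ _
        _ = (e + 1).choose b * (e + 1 - b) := h
        _ = (e + 1 - b) * (e + 1).choose b := mul_comm _ _

lemma Ffun_removeAt (ζ η : Conf V N) (y : V) :
    η.1 y * Ffun ζ (removeAt η y) = (η.1 y - ζ.1 y) * Ffun ζ η := by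
  unfold Ffun
  rw [← Finset.mul_prod_erase Finset.univ
      (fun z => Nat.choose ((removeAt η y).1 z) (ζ.1 z)) (Finset.mem_univ y),
    ← Finset.mul_prod_erase Finset.univ
      (fun z => Nat.choose (η.1 z) (ζ.1 z)) (Finset.mem_univ y)]
  have hzy : ∀ z ∈ Finset.univ.erase y,
      Nat.choose ((removeAt η y).1 z) (ζ.1 z) = Nat.choose (η.1 z) (ζ.1 z) := by
    intro z hz
    have hne : z ≠ y := Finset.ne_of_mem_erase hz
    show Nat.choose (η.1 z - if z = y then 1 else 0) _ = _
    rw [if_neg hne, Nat.sub_zero]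
  rw [Finset.prod_congr rfl hzy]
  have hy : (removeAt η y).1 y = η.1 y - 1 := by
    show η.1 y - (if y = y then 1 else 0) = _
    rw [if_pos rfl]
  rw [hy, ← mul_assoc, ← mul_assoc, choose_step]

lemma sum_mul_Ffun_removeAt (ζ η : Conf V N) (m j : ℕ)
    (hζ : (∑ z, ζ.1 z) = m) (hη : (∑ z, η.1 z) = m + j + 1) :
    (∑ y, η.1 y * Ffun ζ (removeAt η y)) = (j + 1) * Ffun ζ η := by
  rw [Finset.sum_congr rfl fun y _ => Ffun_removeAt ζ η y, ← Finset.sum_mul]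
  by_cases hF : Ffun ζ η = 0
  · rw [hF, Nat.mul_zero, Nat.mul_zero]
  · congr 1
    have hle : ∀ z, ζ.1 z ≤ η.1 z := by
      intro z
      by_contra hlt
      exact hF (Finset.prod_eq_zero (Finset.mem_univ z)
        (Nat.choose_eq_zero_of_lt (by omega)))
    have h2 : (∑ y, (η.1 y - ζ.1 y)) + (∑ y, ζ.1 y) = ∑ y, η.1 y := by
      rw [← Finset.sum_add_distrib]
      exact Finset.sum_congr rfl fun z _ => Nat.sub_add_cancel (hle z)
    omega

lemma ann_iter_indicator (ζ : Conf V N) (m : ℕ) (hζ : (∑ z, ζ.1 z) = m) :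
    ∀ (j : ℕ) (η : Conf V N),
      (ann^[j] (fun ξ => if ξ = ζ then (1:ℝ) else 0)) η
        = (j.factorial : ℝ) * (if (∑ z, η.1 z) = m + j then (Ffun ζ η : ℝ) else 0) := by
  intro j
  induction j with
  | zero =>
      intro η
      simp only [Function.iterate_zero, id_eq, Nat.factorial_zero, Nat.cast_one, one_mul,
        Nat.add_zero]
      by_cases hη : η = ζ
      · subst hη
        rw [if_pos rfl, if_pos hζ]
        unfold Ffun
        simp [Nat.choose_self]
      · rw [if_neg hη]
        by_cases hs : (∑ z, η.1 z) = m
        · rw [if_pos hs]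
          by_cases hF : Ffun ζ η = 0
          · rw [hF]; norm_num
          · exfalso
            have hle : ∀ z, ζ.1 z ≤ η.1 z := by
              intro z
              by_contra hlt
              exact hF (Finset.prod_eq_zero (Finset.mem_univ z)
                (Nat.choose_eq_zero_of_lt (by omega)))
            have heq : ∀ z, η.1 z = ζ.1 z := by
              intro z
              by_contra hne
              have hlt : ζ.1 z < η.1 z := lt_of_le_of_ne (hle z) fun hc => hne hc.symm
              have := Finset.sum_lt_sum (fun i (_ : i ∈ Finset.univ) => hle i)
                ⟨z, Finset.mem_univ z, hlt⟩
              omega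
            exact hη (Subtype.ext (funext heq))
        · rw [if_neg hs]
  | succ j ih =>
      intro η
      rw [Function.iterate_succ_apply']
      have hdef : ∀ (g : Conf V N → ℝ) (ξ : Conf V N),
          ann g ξ = ∑ y : V, (ξ.1 y : ℝ) * g (removeAt ξ y) := fun _ _ => rfl
      rw [hdef]
      rw [Finset.sum_congr rfl fun y _ => by rw [ih (removeAt η y)]]
      have hterm : ∀ y : V, (η.1 y : ℝ) * ((j.factorial : ℝ) *
            (if (∑ z, (removeAt η y).1 z) = m + j then (Ffun ζ (removeAt η y) : ℝ) else 0))
          = if (∑ z, η.1 z) = m + j + 1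
              then (j.factorial : ℝ) * ((η.1 y : ℝ) * (Ffun ζ (removeAt η y) : ℝ)) else 0 := by
        intro y
        rcases Nat.eq_zero_or_pos (η.1 y) with h0 | h1
        · simp [h0]
        · have hsum := sum_removeAt η y h1
          have hsl : 1 ≤ ∑ z, η.1 z :=
            le_trans h1 (Finset.single_le_sum (f := η.1) (fun i _ => Nat.zero_le _)
              (Finset.mem_univ y))
          by_cases hs : (∑ z, η.1 z) = m + j + 1
          · rw [if_pos hs, if_pos (by omega : (∑ z, (removeAt η y).1 z) = m + j)]
            ring
          · rw [if_neg hs, if_neg (by omega : ¬ (∑ z, (removeAt η y).1 z) = m + j)]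
            ring
      rw [Finset.sum_congr rfl fun y _ => hterm y]
      by_cases hs : (∑ z, η.1 z) = m + j + 1
      · rw [if_pos (by omega : (∑ z, η.1 z) = m + (j + 1))]
        simp only [if_pos hs]
        rw [← Finset.mul_sum]
        have hkey : ∑ y : V, (η.1 y : ℝ) * (Ffun ζ (removeAt η y) : ℝ)
            = ((j : ℝ) + 1) * (Ffun ζ η : ℝ) := by
          have h := sum_mul_Ffun_removeAt ζ η m j hζ hs
          exact_mod_cast congrArg (Nat.cast : ℕ → ℝ) h
        rw [hkey, Nat.factorial_succ]
        push_cast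
        ring
      · rw [if_neg (by omega : ¬ (∑ z, η.1 z) = m + (j + 1))]
        simp only [if_neg hs]
        simp

end Aux

/-- **Recursion relations for absorption probabilities** (Theorem 5.1): for a consistent,
particle-number-conserving configuration process whose semigroup converges pointwise as
`t → ∞` to `P`, the limiting expectation of `F(ζ,·)` started from `n > m` particles at
positions `x` equals the sum over all `m`-element subsamples of the absorption
probabilities `(P h_ζ)`. -/
theorem stmt6 {V : Type*} [Fintype V] [DecidableEq V] (N : ℕ)
    (L : (Conf V N → ℝ) →ₗ[ℝ] (Conf V N → ℝ))
    (hcomm : ∀ f, L (ann f) = ann (L f))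
    (hsector : ∀ k ≤ N, ∀ f : Conf V N → ℝ,
        (∀ η : Conf V N, (∑ x, η.1 x) ≠ k → f η = 0) →
        ∀ η : Conf V N, (∑ x, η.1 x) ≠ k → L f η = 0)
    (P : (Conf V N → ℝ) → Conf V N → ℝ)
    (hP : ∀ (f : Conf V N → ℝ) (η : Conf V N),
        Tendsto (fun t : ℝ => expOp t L f η) atTop (𝓝 (P f η)))
    (n : ℕ) (hn : n ≤ N) (x : Fin n → V)
    (ζ : Conf V N) (m : ℕ) (hm1 : 1 ≤ m) (hmn : m < n) (hζ : (∑ y, ζ.1 y) = m) :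
    P (fun η => (Ffun ζ η : ℝ)) (phiS hn x Finset.univ)
      = ∑ S ∈ Finset.powersetCard m (Finset.univ : Finset (Fin n)),
          P (fun η => if η = ζ then 1 else 0) (phiS hn x S) := by
  classical
  set h : Conf V N → ℝ := fun η => if η = ζ then 1 else 0 with hh
  set k := n - m with hk
  have hfac : (k.factorial : ℝ) ≠ 0 := Nat.cast_ne_zero.mpr k.factorial_ne_zero
  have hφsum : (∑ y, (phiS hn x (Finset.univ : Finset (Fin n))).1 y) = n := by
    rw [phiS_sum]
    simp
  have hFn : P (fun η => (Ffun ζ η : ℝ)) (phiS hn x Finset.univ)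
      = P ((k.factorial : ℝ)⁻¹ • (ann^[k] h)) (phiS hn x Finset.univ) := by
    refine P_eq_on_sector L hsector P hP _ _ n ?_ _ hφsum
    intro ξ hξ
    have hind := ann_iter_indicator ζ m hζ k ξ
    rw [if_pos (by omega : (∑ z, ξ.1 z) = m + k)] at hind
    show (Ffun ζ ξ : ℝ) = (k.factorial : ℝ)⁻¹ • (ann^[k] h) ξ
    rw [smul_eq_mul, hind, ← mul_assoc, inv_mul_cancel₀ hfac, one_mul]
  rw [hFn, P_smul L P hP, P_ann_iter L hcomm P hP,
    ann_iter_phiS hn x (P h) k Finset.univ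
      (by simp only [Finset.card_univ, Fintype.card_fin]; omega)]
  have hcard : (Finset.univ : Finset (Fin n)).card - k = m := by
    simp only [Finset.card_univ, Fintype.card_fin]
    omega
  rw [hcard, ← mul_assoc, inv_mul_cancel₀ hfac, one_mul]
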